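/- Let D ≥ 2 and n ≥ 2. For every PMF P on n symbols, the minimum expected length of P is at most that of the uniform distribution: L_D(P) ≤ L_D(U_n). That is, the minimum expected length function attains its maximum value at the uniform distribution. -/
import Mathlib

/-- `P` is a probability mass function on `n` symbols: all entries positive, summing to 1. -/
def IsPMF {n : ℕ} (P : Fin n → ℝ) : Prop :=
  (∀ i, 0 < P i) ∧ ∑ i, P i = 1

/-- `c` is a `D`-ary prefix code on `n` symbols: injective, and no codeword is a
prefix of another. -/
def IsPrefixCode {D n : ℕ} (c : Fin n → List (Fin D)) : Prop :=
  Function.Injective c ∧ ∀ i j : Fin n, i ≠ j → ¬ (c i <+: c j)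

/-- Expected length of the code `c` under the PMF `P`. -/
noncomputable def expLen {D n : ℕ} (P : Fin n → ℝ) (c : Fin n → List (Fin D)) : ℝ :=
  ∑ i, P i * ((c i).length : ℝ)

/-- Minimum expected length: infimum of expected lengths over all `D`-ary prefix codes. -/
noncomputable def minExpLen (D : ℕ) {n : ℕ} (P : Fin n → ℝ) : ℝ :=
  sInf {x : ℝ | ∃ c : Fin n → List (Fin D), IsPrefixCode c ∧ x = expLen P c}

/-- The uniform distribution on `n` symbols. -/
noncomputable def unif (n : ℕ) : Fin n → ℝ := fun _ => 1 / n

/-- A fixed-length prefix code exists. -/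
lemma exists_prefixCode (D n : ℕ) (hD : 2 ≤ D) :
    ∃ c : Fin n → List (Fin D), IsPrefixCode c := by
  have hone : (⟨1, by omega⟩ : Fin D) ≠ ⟨0, by omega⟩ := by
    intro h
    exact absurd (congrArg Fin.val h) (by simp)
  refine ⟨fun i => List.ofFn (fun j : Fin n => if j = i then (⟨1, by omega⟩ : Fin D)
    else ⟨0, by omega⟩), ?_, ?_⟩
  · intro i j hij
    have hf := congrFun (List.ofFn_injective hij) i
    by_contra h
    rw [if_pos rfl, if_neg h] at hf
    exact hone hf
  · intro i j hij hpre
    have hlen : (List.ofFn (fun k : Fin n => if k = i then (⟨1, by omega⟩ : Fin D)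
        else ⟨0, by omega⟩)).length = (List.ofFn (fun k : Fin n => if k = j then
        (⟨1, by omega⟩ : Fin D) else ⟨0, by omega⟩)).length := by simp
    have hf := congrFun (List.ofFn_injective (hpre.eq_of_length hlen)) i
    rw [if_pos rfl, if_neg hij] at hf
    exact hone hf

/-- Key rearrangement/Chebyshev lemma: some permutation of the lengths has expected
value at most the average. -/
lemma exists_perm_le (n : ℕ) (P ℓ : Fin n → ℝ) (hsum : ∑ i, P i = 1) :
    ∃ ρ : Equiv.Perm (Fin n), ∑ i, P i * ℓ (ρ i) ≤ (1 / n) * ∑ i, ℓ i := by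
  rcases Nat.eq_zero_or_pos n with rfl | hn
  · simp at hsum
  set τ := Tuple.sort P with hτ
  set σ := Tuple.sort ℓ with hσ
  have hf : Monotone (P ∘ τ) := Tuple.monotone_sort P
  have hg : Antitone (fun i : Fin n => ℓ (σ (Fin.rev i))) := by
    intro a b hab
    exact Tuple.monotone_sort ℓ (Fin.rev_le_rev.mpr hab)
  have hanti : Antivary (P ∘ τ) (fun i : Fin n => ℓ (σ (Fin.rev i))) := hf.antivary hg
  have hcheb := hanti.card_mul_sum_le_sum_mul_sum (α := ℝ)
  rw [Fintype.card_fin] at hcheb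
  have h1 : ∑ i, (P ∘ τ) i = 1 := by
    rw [Function.comp_def, Equiv.sum_comp τ P]; exact hsum
  have h2 : ∑ i : Fin n, ℓ (σ (Fin.rev i)) = ∑ i, ℓ i := by
    rw [← Equiv.sum_comp (Fin.revPerm.trans σ) ℓ]; rfl
  rw [h1, h2, one_mul] at hcheb
  refine ⟨τ.symm.trans (Fin.revPerm.trans σ), ?_⟩
  have hre : ∑ i, P i * ℓ ((τ.symm.trans (Fin.revPerm.trans σ)) i)
      = ∑ i, (P ∘ τ) i * ℓ (σ (Fin.rev i)) := by
    rw [← Equiv.sum_comp τ (fun i => P i * ℓ ((τ.symm.trans (Fin.revPerm.trans σ)) i))]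
    apply Finset.sum_congr rfl
    intro i _
    simp [Equiv.trans_apply]
  rw [hre, div_mul_eq_mul_div, one_mul, le_div_iff₀ (by positivity)]
  calc (∑ i, (P ∘ τ) i * ℓ (σ (Fin.rev i))) * n
      = (n : ℝ) * ∑ i, (P ∘ τ) i * ℓ (σ (Fin.rev i)) := by ring
    _ ≤ ∑ i, ℓ i := hcheb

/-- The minimum expected length function attains its maximum at the
uniform distribution. -/
theorem stmt_2 (D n : ℕ) (hD : 2 ≤ D) (hn : 2 ≤ n)
    (P : Fin n → ℝ) (hP : IsPMF P) :
    minExpLen D P ≤ minExpLen D (unif n) := by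
  obtain ⟨c0, hc0⟩ := exists_prefixCode D n hD
  have hbdd : BddBelow {x : ℝ | ∃ c : Fin n → List (Fin D), IsPrefixCode c ∧ x = expLen P c} := by
    refine ⟨0, ?_⟩
    rintro x ⟨c, hc, rfl⟩
    exact Finset.sum_nonneg fun i _ => mul_nonneg (hP.1 i).le (Nat.cast_nonneg _)
  have hne : Set.Nonempty {x : ℝ | ∃ c : Fin n → List (Fin D),
      IsPrefixCode c ∧ x = expLen (unif n) c} := ⟨expLen (unif n) c0, c0, hc0, rfl⟩
  apply le_csInf hne
  rintro x ⟨c, hc, rfl⟩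
  obtain ⟨ρ, hρ⟩ := exists_perm_le n P (fun i => ((c i).length : ℝ)) hP.2
  have hmem : expLen P (c ∘ ρ) ∈
      {x : ℝ | ∃ c : Fin n → List (Fin D), IsPrefixCode c ∧ x = expLen P c} := by
    refine ⟨c ∘ ρ, ⟨hc.1.comp ρ.injective, ?_⟩, rfl⟩
    intro i j hij
    exact hc.2 (ρ i) (ρ j) (fun h => hij (ρ.injective h))
  refine le_trans (csInf_le hbdd hmem) ?_
  calc expLen P (c ∘ ρ) = ∑ i, P i * ((c (ρ i)).length : ℝ) := rfl
    _ ≤ (1 / n) * ∑ i, ((c i).length : ℝ) := hρ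
    _ = expLen (unif n) c := by rw [expLen, Finset.mul_sum]; simp [unif]
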